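/- Let Σ be an n×n real positive definite matrix and let α > 0. Let ε be a random vector in ℝⁿ distributed according to the multivariate Gaussian measure N(0,Σ), and let ξ be uniformly distributed on [0,1] and independent of ε. Then P(ξ ≤ exp(−(1/2) εᵀ (αΣ)⁻¹ ε)) = (α/(1+α))^{n/2}, and for every Borel set S ⊆ ℝⁿ, P(ε ∈ S and ξ ≤ exp(−(1/2) εᵀ (αΣ)⁻¹ ε)) = (α/(1+α))^{n/2} · N(0, (α/(1+α)) Σ)(S); that is, conditioned on this event, ε is distributed as N(0, (α/(1+α)) Σ). -/

import Mathlib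

open MeasureTheory Matrix Real
open scoped ENNReal

lemma posdef_smul' {n : ℕ} {Sig : Matrix (Fin n) (Fin n) ℝ} (hSig : Sig.PosDef)
    {c : ℝ} (hc : 0 < c) : (c • Sig).PosDef := by
  refine PosDef.of_dotProduct_mulVec_pos ?_ (fun x hx => ?_)
  · unfold Matrix.IsHermitian
    rw [conjTranspose_smul, hSig.1]
    simp
  · rw [smul_mulVec, dotProduct_smul]
    exact mul_pos hc (hSig.dotProduct_mulVec_pos hx)

lemma inv_smul'' {n : ℕ} {Sig : Matrix (Fin n) (Fin n) ℝ} (hSig : Sig.PosDef)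
    {c : ℝ} (hc : c ≠ 0) : (c • Sig)⁻¹ = c⁻¹ • Sig⁻¹ := by
  apply Matrix.inv_eq_right_inv
  rw [Matrix.smul_mul, Matrix.mul_smul,
    Matrix.mul_nonsing_inv _ (isUnit_iff_ne_zero.2 hSig.det_pos.ne'), smul_smul,
    mul_inv_cancel₀ hc, one_smul]

lemma quad_smul' {n : ℕ} (M : Matrix (Fin n) (Fin n) ℝ) (c : ℝ) (x : Fin n → ℝ) :
    x ⬝ᵥ (c • M).mulVec x = c * (x ⬝ᵥ M.mulVec x) := by
  rw [smul_mulVec, dotProduct_smul]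
  simp

lemma quad_cont' {n : ℕ} (M : Matrix (Fin n) (Fin n) ℝ) :
    Continuous fun x : Fin n → ℝ => x ⬝ᵥ M.mulVec x := by
  simp only [dotProduct, mulVec, Finset.sum_apply]
  fun_prop

open scoped MatrixOrder in
lemma gauss_integral' {n : ℕ} (Z : Matrix (Fin n) (Fin n) ℝ) (hZ : Z.PosDef) :
    (∫ x : Fin n → ℝ, Real.exp (-(1/2) * (x ⬝ᵥ Z⁻¹.mulVec x))) = Real.sqrt ((2 * π) ^ n * Z.det)
    ∧ Integrable (fun x : Fin n → ℝ => Real.exp (-(1/2) * (x ⬝ᵥ Z⁻¹.mulVec x))) := by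
  have hZi : Z⁻¹.PosDef := hZ.inv
  set B := CFC.sqrt Z⁻¹ with hBdef
  have hBsym : Bᵀ = B := (CFC.sqrt_nonneg Z⁻¹).posSemidef.1
  have hBB : B * B = Z⁻¹ := CFC.sqrt_mul_sqrt_self Z⁻¹ hZi.posSemidef.nonneg
  have hdetZ : 0 < Z.det := hZ.det_pos
  have hdetZinv : Z⁻¹.det = Z.det⁻¹ := by
    rw [det_nonsing_inv, Ring.inverse_eq_inv']
  have hdetB2 : B.det ^ 2 = Z.det⁻¹ := by
    rw [← hdetZinv, ← hBB, det_mul, sq]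
  have hdetB : B.det ≠ 0 := by
    intro h; rw [h] at hdetB2
    exact hdetZ.ne' (by simpa using hdetB2.symm)
  have habs : |B.det|⁻¹ = Real.sqrt Z.det := by
    rw [← Real.sqrt_sq_eq_abs, hdetB2, Real.sqrt_inv, inv_inv]
  have hquad : ∀ x : Fin n → ℝ, x ⬝ᵥ Z⁻¹.mulVec x = (B.mulVec x) ⬝ᵥ (B.mulVec x) := by
    intro x
    rw [← hBB, ← mulVec_mulVec, dotProduct_mulVec, ← hBsym, vecMul_transpose, hBsym]
  set g : (Fin n → ℝ) → ℝ := fun y => Real.exp (-(1/2) * (y ⬝ᵥ y)) with hg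
  have hgcont : Continuous g := by
    simp only [hg, dotProduct]; fun_prop
  have hcomp : (fun x : Fin n → ℝ => Real.exp (-(1/2) * (x ⬝ᵥ Z⁻¹.mulVec x)))
      = g ∘ (Matrix.toLin' B) := by
    funext x; simp [hg, hquad x, Matrix.toLin'_apply]
  have hmap : Measure.map (Matrix.toLin' B) volume = ENNReal.ofReal |B.det|⁻¹ • volume := by
    have := Real.map_linearMap_volume_pi_eq_smul_volume_pi (f := (Matrix.toLin' B : _ →ₗ[ℝ] _))
      (by rwa [LinearMap.det_toLin'])
    rw [this, LinearMap.det_toLin', abs_inv]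
  have hgprod : g = fun y => ∏ i, Real.exp (-(2⁻¹ : ℝ) * (y i) ^ 2) := by
    funext y
    have h1 : -(1/2 : ℝ) * (y ⬝ᵥ y) = ∑ i, (-(2⁻¹ : ℝ) * (y i) ^ 2) := by
      rw [dotProduct, Finset.mul_sum]
      exact Finset.sum_congr rfl (fun i _ => by ring)
    rw [hg]
    simp only [h1, Real.exp_sum]
  have hgint : Integrable g := by
    rw [hgprod]
    exact Integrable.fintype_prod (fun i => integrable_exp_neg_mul_sq (by norm_num))
  have hintg : ∫ y, g y = Real.sqrt (2 * π) ^ n := by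
    rw [hgprod, integral_fintype_prod_volume_eq_pow (ι := Fin n) (fun t : ℝ => Real.exp (-(2⁻¹) * t ^ 2)),
      integral_gaussian]
    norm_num; rw [mul_comm]
  have hTmeas : Measurable (Matrix.toLin' B) := (LinearMap.continuous_on_pi _).measurable
  constructor
  · rw [hcomp]
    simp only [Function.comp_def]
    rw [← integral_map hTmeas.aemeasurable hgcont.aestronglyMeasurable, hmap,
      integral_smul_measure, habs, hintg]
    simp only [smul_eq_mul]
    rw [ENNReal.toReal_ofReal (Real.sqrt_nonneg _)]
    have h2pi : (0:ℝ) ≤ 2 * π := le_of_lt Real.two_pi_pos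
    rw [Real.sqrt_eq_rpow, Real.sqrt_eq_rpow, Real.sqrt_eq_rpow,
      Real.mul_rpow (by positivity) hdetZ.le, ← Real.rpow_natCast (2 * π) n,
      ← Real.rpow_mul h2pi, mul_comm (n:ℝ), Real.rpow_mul h2pi, Real.rpow_natCast]
    ring
  · rw [hcomp]
    rw [← integrable_map_measure (hmap ▸ hgcont.aestronglyMeasurable) hTmeas.aemeasurable]
    rw [hmap]
    exact hgint.smul_measure ENNReal.ofReal_ne_top

lemma dens_eq' {n : ℕ} {Sig : Matrix (Fin n) (Fin n) ℝ} (hSig : Sig.PosDef)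
    {α : ℝ} (hα : 0 < α) (x : Fin n → ℝ) :
    (((2 * π) ^ (n : ℝ) * Sig.det) ^ (-(1 : ℝ) / 2) *
        Real.exp (-(1 / 2) * (x ⬝ᵥ Sig⁻¹.mulVec x))) *
      Real.exp (-(1 / 2) * (x ⬝ᵥ ((α • Sig)⁻¹).mulVec x))
    = (α / (1 + α)) ^ ((n : ℝ) / 2) *
      (((2 * π) ^ (n : ℝ) * ((α / (1 + α)) • Sig).det) ^ (-(1 : ℝ) / 2) *
        Real.exp (-(1 / 2) * (x ⬝ᵥ (((α / (1 + α)) • Sig)⁻¹).mulVec x))) := by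
  have h1α : (0:ℝ) < 1 + α := by linarith
  set κ : ℝ := α / (1 + α) with hκdef
  have hκ : 0 < κ := div_pos hα h1α
  rw [inv_smul'' hSig hα.ne', inv_smul'' hSig hκ.ne', quad_smul', quad_smul']
  set q := x ⬝ᵥ Sig⁻¹.mulVec x with hq
  have hexp : Real.exp (-(1/2) * q) * Real.exp (-(1/2) * (α⁻¹ * q))
      = Real.exp (-(1/2) * (κ⁻¹ * q)) := by
    rw [← Real.exp_add]
    congr 1
    have hκinv : κ⁻¹ = (1 + α) / α := by
      rw [hκdef, inv_div]
    rw [hκinv]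
    field_simp
    ring
  have hdet : ((κ : ℝ) • Sig).det = κ ^ (n : ℕ) * Sig.det := by
    rw [det_smul, Fintype.card_fin]
  have hP : (0:ℝ) < (2 * π) ^ (n : ℝ) * Sig.det := by
    have := Real.two_pi_pos
    have := hSig.det_pos
    positivity
  have hconst : ((2 * π) ^ (n : ℝ) * ((κ : ℝ) • Sig).det) ^ (-(1 : ℝ) / 2)
      = κ ^ (-((n:ℝ) / 2)) * ((2 * π) ^ (n : ℝ) * Sig.det) ^ (-(1 : ℝ) / 2) := by
    rw [hdet, ← Real.rpow_natCast κ n]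
    have h2pi : (0:ℝ) < (2 * π) ^ (n : ℝ) := Real.rpow_pos_of_pos Real.two_pi_pos _
    rw [show (2 * π) ^ (n : ℝ) * (κ ^ (n:ℝ) * Sig.det)
        = κ ^ (n:ℝ) * ((2 * π) ^ (n : ℝ) * Sig.det) by ring]
    rw [Real.mul_rpow (le_of_lt (Real.rpow_pos_of_pos hκ _)) hP.le,
      ← Real.rpow_mul hκ.le]
    norm_num
    left
    congr 1
    ring
  rw [hconst, mul_assoc, hexp]
  have hone : κ ^ ((n:ℝ)/2) * κ ^ (-((n:ℝ)/2)) = 1 := by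
    rw [← Real.rpow_add hκ]
    norm_num
  calc ((2 * π) ^ (n:ℝ) * Sig.det) ^ (-(1:ℝ) / 2) * Real.exp (-(1/2) * (κ⁻¹ * q))
      = (κ ^ ((n:ℝ)/2) * κ ^ (-((n:ℝ)/2))) *
        (((2 * π) ^ (n:ℝ) * Sig.det) ^ (-(1:ℝ) / 2) * Real.exp (-(1/2) * (κ⁻¹ * q))) := by
        rw [hone, one_mul]
    _ = κ ^ ((n:ℝ)/2) * (κ ^ (-((n:ℝ)/2)) * ((2 * π) ^ (n:ℝ) * Sig.det) ^ (-(1:ℝ) / 2) *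
        Real.exp (-(1/2) * (κ⁻¹ * q))) := by ring

/-- The multivariate Gaussian measure `N(0, Z)` on `ℝⁿ` with positive definite
covariance matrix `Z`, given by its density with respect to Lebesgue measure. -/
noncomputable def mvGaussian (n : ℕ) (Z : Matrix (Fin n) (Fin n) ℝ) :
    Measure (Fin n → ℝ) :=
  volume.withDensity fun z => ENNReal.ofReal
    (((2 * Real.pi) ^ (n : ℝ) * Z.det) ^ (-(1 : ℝ) / 2) *
      Real.exp (-(1 / 2) * (z ⬝ᵥ Z⁻¹.mulVec z)))

lemma mvGaussian_univ' {n : ℕ} {Z : Matrix (Fin n) (Fin n) ℝ} (hZ : Z.PosDef) :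
    mvGaussian n Z Set.univ = 1 := by
  set C : ℝ := ((2 * Real.pi) ^ (n : ℝ) * Z.det) ^ (-(1 : ℝ) / 2) with hC
  have hP : (0:ℝ) < (2 * π) ^ (n : ℝ) * Z.det := by
    have := Real.two_pi_pos
    have := hZ.det_pos
    positivity
  have hCpos : 0 < C := Real.rpow_pos_of_pos hP _
  rw [mvGaussian, withDensity_apply _ MeasurableSet.univ, Measure.restrict_univ]
  have hint := gauss_integral' Z hZ
  have hInt : Integrable (fun x : Fin n → ℝ => C * Real.exp (-(1/2) * (x ⬝ᵥ Z⁻¹.mulVec x))) :=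
    hint.2.const_mul C
  rw [← ofReal_integral_eq_lintegral_ofReal hInt
    (Filter.Eventually.of_forall fun x => by positivity)]
  rw [integral_const_mul, hint.1]
  have : C * Real.sqrt ((2 * π) ^ n * Z.det) = 1 := by
    rw [hC, Real.sqrt_eq_rpow, ← Real.rpow_natCast (2*π) n] at *
    rw [← Real.rpow_add hP]
    norm_num
  rw [this, ENNReal.ofReal_one]

lemma trigger_measure' {n : ℕ} {Sig : Matrix (Fin n) (Fin n) ℝ} (hSig : Sig.PosDef)
    {α : ℝ} (hα : 0 < α) (S : Set (Fin n → ℝ)) (hS : MeasurableSet S) :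
    ((mvGaussian n Sig).prod (volume.restrict (Set.Icc (0 : ℝ) 1)))
      {p : (Fin n → ℝ) × ℝ |
        p.1 ∈ S ∧ p.2 ≤ Real.exp (-(1 / 2) * (p.1 ⬝ᵥ ((α • Sig)⁻¹).mulVec p.1))}
      = ENNReal.ofReal ((α / (1 + α)) ^ ((n : ℝ) / 2)) *
          mvGaussian n ((α / (1 + α)) • Sig) S := by
  set e : (Fin n → ℝ) → ℝ :=
    fun x => Real.exp (-(1 / 2) * (x ⬝ᵥ ((α • Sig)⁻¹).mulVec x)) with he
  have hecont : Continuous e := by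
    apply Real.continuous_exp.comp
    exact (continuous_const.mul (quad_cont' _))
  have he0 : ∀ x, 0 < e x := fun x => Real.exp_pos _
  have he1 : ∀ x, e x ≤ 1 := by
    intro x
    rw [he]
    apply Real.exp_le_one_iff.2
    have hquad : 0 ≤ x ⬝ᵥ ((α • Sig)⁻¹).mulVec x := by
      have h := ((posdef_smul' hSig hα).inv).posSemidef.dotProduct_mulVec_nonneg x
      simpa using h
    nlinarith
  set A : Set ((Fin n → ℝ) × ℝ) := {p | p.1 ∈ S ∧ p.2 ≤ e p.1} with hA
  have hAmeas : MeasurableSet A := by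
    have h1 : MeasurableSet ((fun p : (Fin n → ℝ) × ℝ => p.1) ⁻¹' S) := measurable_fst hS
    have h2 : MeasurableSet {p : (Fin n → ℝ) × ℝ | p.2 ≤ e p.1} :=
      measurableSet_le measurable_snd (hecont.measurable.comp measurable_fst)
    exact h1.inter h2
  rw [Measure.prod_apply hAmeas]
  have hslice : ∀ x, (volume.restrict (Set.Icc (0:ℝ) 1)) (Prod.mk x ⁻¹' A)
      = S.indicator (fun x => ENNReal.ofReal (e x)) x := by
    intro x
    by_cases hx : x ∈ S
    · have h1 : Prod.mk x ⁻¹' A = Set.Iic (e x) := by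
        ext t; simp [hA, hx]
      rw [h1, Measure.restrict_apply measurableSet_Iic]
      have h2 : Set.Iic (e x) ∩ Set.Icc 0 1 = Set.Icc 0 (e x) := by
        ext t
        simp only [Set.mem_inter_iff, Set.mem_Iic, Set.mem_Icc]
        constructor
        · rintro ⟨h, h0, _⟩; exact ⟨h0, h⟩
        · rintro ⟨h0, h⟩; exact ⟨h, h0, h.trans (he1 x)⟩
      rw [h2, Real.volume_Icc, Set.indicator_of_mem hx]
      norm_num
    · have h1 : Prod.mk x ⁻¹' A = ∅ := by
        ext t; simp [hA, hx]
      rw [h1, Set.indicator_of_notMem hx]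
      simp
  rw [lintegral_congr hslice, lintegral_indicator hS]
  set D : (Fin n → ℝ) → ℝ≥0∞ := fun z => ENNReal.ofReal
    (((2 * Real.pi) ^ (n : ℝ) * Sig.det) ^ (-(1 : ℝ) / 2) *
      Real.exp (-(1 / 2) * (z ⬝ᵥ Sig⁻¹.mulVec z))) with hD
  set D' : (Fin n → ℝ) → ℝ≥0∞ := fun z => ENNReal.ofReal
    (((2 * Real.pi) ^ (n : ℝ) * ((α / (1 + α)) • Sig).det) ^ (-(1 : ℝ) / 2) *
      Real.exp (-(1 / 2) * (z ⬝ᵥ (((α / (1 + α)) • Sig)⁻¹).mulVec z))) with hD'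
  have hDmeas : Measurable D := by
    apply ENNReal.measurable_ofReal.comp
    exact (continuous_const.mul ((Real.continuous_exp.comp
      (continuous_const.mul (quad_cont' _))))).measurable
  have hD'meas : Measurable D' := by
    apply ENNReal.measurable_ofReal.comp
    exact (continuous_const.mul ((Real.continuous_exp.comp
      (continuous_const.mul (quad_cont' _))))).measurable
  have hemeas : Measurable fun x => ENNReal.ofReal (e x) :=
    ENNReal.measurable_ofReal.comp hecont.measurable
  have hrw : mvGaussian n Sig = volume.withDensity D := rfl
  rw [hrw, restrict_withDensity hS, lintegral_withDensity_eq_lintegral_mul _ hDmeas hemeas]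
  have hpt : ∀ x, (D * fun x => ENNReal.ofReal (e x)) x
      = ENNReal.ofReal ((α / (1 + α)) ^ ((n : ℝ) / 2)) * D' x := by
    intro x
    have hCpos : (0:ℝ) ≤ ((2 * Real.pi) ^ (n : ℝ) * Sig.det) ^ (-(1 : ℝ) / 2) := by
      have := Real.two_pi_pos
      have := hSig.det_pos
      positivity
    simp only [Pi.mul_apply, hD, hD']
    rw [← ENNReal.ofReal_mul (by positivity), dens_eq' hSig hα x,
      ENNReal.ofReal_mul (by positivity)]
  simp_rw [hpt]
  rw [lintegral_const_mul _ hD'meas]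
  congr 1
  rw [mvGaussian, withDensity_apply _ hS]

/-- The special case `Π = αΣ` of the stochastic event-triggering rule: if
`ε ∼ N(0, Σ)` and `ξ ∼ U[0,1]` are independent, then
`P(ξ ≤ exp(-½ εᵀ (αΣ)⁻¹ ε)) = (α/(1+α))^{n/2}`, and conditioned on this event
`ε ∼ N(0, (α/(1+α)) Σ)`. -/
theorem gaussian_event_trigger_special (n : ℕ) (Sig : Matrix (Fin n) (Fin n) ℝ)
    (hSig : Sig.PosDef) (α : ℝ) (hα : 0 < α) :
    ((mvGaussian n Sig).prod (volume.restrict (Set.Icc (0 : ℝ) 1)))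
        {p : (Fin n → ℝ) × ℝ |
          p.2 ≤ Real.exp (-(1 / 2) * (p.1 ⬝ᵥ ((α • Sig)⁻¹).mulVec p.1))}
        = ENNReal.ofReal ((α / (1 + α)) ^ ((n : ℝ) / 2)) ∧
      ∀ S : Set (Fin n → ℝ), MeasurableSet S →
        ((mvGaussian n Sig).prod (volume.restrict (Set.Icc (0 : ℝ) 1)))
          {p : (Fin n → ℝ) × ℝ |
            p.1 ∈ S ∧ p.2 ≤ Real.exp (-(1 / 2) * (p.1 ⬝ᵥ ((α • Sig)⁻¹).mulVec p.1))}
          = ENNReal.ofReal ((α / (1 + α)) ^ ((n : ℝ) / 2)) *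
              mvGaussian n ((α / (1 + α)) • Sig) S := by
  have hκ : 0 < α / (1 + α) := div_pos hα (by linarith)
  constructor
  · have h0 : {p : (Fin n → ℝ) × ℝ |
        p.2 ≤ Real.exp (-(1 / 2) * (p.1 ⬝ᵥ ((α • Sig)⁻¹).mulVec p.1))}
        = {p : (Fin n → ℝ) × ℝ | p.1 ∈ (Set.univ : Set (Fin n → ℝ)) ∧
          p.2 ≤ Real.exp (-(1 / 2) * (p.1 ⬝ᵥ ((α • Sig)⁻¹).mulVec p.1))} := by
      ext p; simp
    rw [h0, trigger_measure' hSig hα Set.univ MeasurableSet.univ,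
      mvGaussian_univ' (posdef_smul' hSig hκ), mul_one]
  · exact fun S hS => trigger_measure' hSig hα S hS
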